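/- Let Y, θ, ε > 0 and S ≥ 1 be reals, set K := Y·θ·S/ε and x := √(ln(K + 1)), and define erf(x) := (2/√π)·∫₀^x e^{−t²} dt. Then for every real M with M ≥ (S/π)·(2·ln(K + 1) + ln S + ln(2/π)), one has (Y·θ·S²/π)·(1/erf(x))·exp(x²)·exp(−π·M/S) ≤ ε/2. -/

import Mathlib

/-- The error function `erf(x) = (2/√π)·∫₀^x e^{-u²} du`. -/
noncomputable def erf (x : ℝ) : ℝ := (2 / Real.sqrt Real.pi) * ∫ u in (0:ℝ)..x, Real.exp (-u ^ 2)

open MeasureTheory Set Real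

lemma tail_mul (x : ℝ) : ∫ t in Ioi x, t * Real.exp (-t^2) = Real.exp (-x^2) / 2 := by
  have hderiv : ∀ t ∈ Ici x, HasDerivAt (fun t : ℝ => -Real.exp (-t^2) / 2)
      (t * Real.exp (-t^2)) t := by
    intro t _
    have h1 : HasDerivAt (fun t : ℝ => -t^2) (-(2*t)) t := by
      have h := (hasDerivAt_pow 2 t).neg
      simp at h
      exact h
    have : HasDerivAt (fun t : ℝ => -Real.exp (-t^2) / 2) (-(Real.exp (-t^2) * -(2*t)) / 2) t :=
      (h1.exp).neg.div_const 2
    convert this using 1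
    ring
  have hint : IntegrableOn (fun t : ℝ => t * Real.exp (-t^2)) (Ioi x) := by
    have := (integrable_mul_exp_neg_mul_sq (b := 1) one_pos).integrableOn (s := Ioi x)
    simpa using this
  have htend : Filter.Tendsto (fun t : ℝ => -Real.exp (-t^2) / 2) Filter.atTop (nhds 0) := by
    have h2 : Filter.Tendsto (fun t : ℝ => -t^2) Filter.atTop Filter.atBot := by
      simpa using (Filter.tendsto_pow_atTop (two_ne_zero)).neg
    have := (Real.tendsto_exp_atBot.comp h2).neg.div_const 2
    simpa using this
  have := integral_Ioi_of_hasDerivAt_of_tendsto' hderiv hint htend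
  rw [this]; ring

lemma tail_bound {x : ℝ} (hx : 0 < x) :
    ∫ t in Ioi x, Real.exp (-t^2) ≤ Real.exp (-x^2) / (2*x) := by
  have h1 : ∫ t in Ioi x, Real.exp (-t^2) ≤ ∫ t in Ioi x, (t/x) * Real.exp (-t^2) := by
    apply setIntegral_mono_on
    · have := (integrable_exp_neg_mul_sq (b := 1) one_pos).integrableOn (s := Ioi x)
      simpa using this
    · have := ((integrable_mul_exp_neg_mul_sq (b := 1) one_pos).integrableOn (s := Ioi x)).div_const x
      simpa [div_mul_eq_mul_div, mul_div_assoc, div_mul_eq_mul_div] using (show IntegrableOn (fun t : ℝ => t * Real.exp (-1 * t ^ 2) / x) (Ioi x) volume from this)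
    · exact measurableSet_Ioi
    · intro t ht
      have htx : x ≤ t := le_of_lt ht
      have : (1:ℝ) ≤ t / x := (one_le_div hx).mpr htx
      nlinarith [Real.exp_pos (-t^2)]
  have h2 : ∫ t in Ioi x, (t/x) * Real.exp (-t^2) = (1/x) * ∫ t in Ioi x, t * Real.exp (-t^2) := by
    rw [← integral_const_mul]
    congr 1; ext t; ring
  rw [h2, tail_mul] at h1
  calc ∫ t in Ioi x, Real.exp (-t^2) ≤ (1/x) * (Real.exp (-x^2)/2) := h1
    _ = Real.exp (-x^2) / (2*x) := by ring


lemma split_int {x : ℝ} (hx : 0 ≤ x) :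
    (∫ u in (0:ℝ)..x, Real.exp (-u ^ 2))
      = Real.sqrt Real.pi / 2 - ∫ t in Ioi x, Real.exp (-t^2) := by
  have hi0 : IntegrableOn (fun t : ℝ => Real.exp (-t^2)) (Ioi 0) := by
    have := (integrable_exp_neg_mul_sq (b := 1) one_pos).integrableOn (s := Ioi (0:ℝ))
    simpa using this
  have hix : IntegrableOn (fun t : ℝ => Real.exp (-t^2)) (Ioi x) := by
    have := (integrable_exp_neg_mul_sq (b := 1) one_pos).integrableOn (s := Ioi x)
    simpa using this
  have hioc : IntegrableOn (fun t : ℝ => Real.exp (-t^2)) (Ioc 0 x) := by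
    have := (integrable_exp_neg_mul_sq (b := 1) one_pos).integrableOn (s := Ioc (0:ℝ) x)
    simpa using this
  have hunion : (∫ t in Ioi (0:ℝ), Real.exp (-t^2))
      = (∫ t in Ioc (0:ℝ) x, Real.exp (-t^2)) + ∫ t in Ioi x, Real.exp (-t^2) := by
    rw [← setIntegral_union (Ioc_disjoint_Ioi le_rfl) measurableSet_Ioi hioc hix,
      Ioc_union_Ioi_eq_Ioi hx]
  have hgauss : (∫ t in Ioi (0:ℝ), Real.exp (-t^2)) = Real.sqrt Real.pi / 2 := by
    have := integral_gaussian_Ioi 1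
    simpa using this
  rw [intervalIntegral.integral_of_le hx]
  rw [hgauss] at hunion
  linarith [hunion]

lemma hasDerivAt_erf (t : ℝ) :
    HasDerivAt erf (2 / Real.sqrt Real.pi * Real.exp (-t^2)) t := by
  have hc : Continuous fun u : ℝ => Real.exp (-u ^ 2) := by fun_prop
  have hI : HasDerivAt (fun t : ℝ => ∫ u in (0:ℝ)..t, Real.exp (-u ^ 2))
      (Real.exp (-t^2)) t := by
    simpa using (hc.integral_hasStrictDerivAt 0 t).hasDerivAt
  exact hI.const_mul (2 / Real.sqrt Real.pi)

lemma erf_lower {x : ℝ} (hx : 0 ≤ x) : 1 - Real.exp (-x^2) ≤ erf x := by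
  have hpi : 0 < Real.sqrt Real.pi := Real.sqrt_pos.mpr Real.pi_pos
  set c : ℝ := (Real.sqrt Real.pi)⁻¹ with hc
  have hcpos : 0 < c := inv_pos.mpr hpi
  have hcmul : c * Real.sqrt Real.pi = 1 := inv_mul_cancel₀ (ne_of_gt hpi)
  rcases le_or_gt x c with hxc | hxc
  · -- monotone part
    set F : ℝ → ℝ := fun t => erf t - (1 - Real.exp (-t^2)) with hF
    have hE : ∀ t : ℝ, HasDerivAt (fun t : ℝ => Real.exp (-t^2))
        (Real.exp (-t^2) * (-(2*t))) t := by
      intro t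
      exact (by have h := (hasDerivAt_pow 2 t).neg; simp at h; exact h : HasDerivAt (fun t : ℝ => -t^2) (-(2*t)) t).exp
    have hFd : ∀ t : ℝ, HasDerivAt F
        (2 / Real.sqrt Real.pi * Real.exp (-t^2) - (0 - Real.exp (-t^2) * (-(2*t)))) t := by
      intro t
      exact (hasDerivAt_erf t).sub ((hasDerivAt_const t 1).sub (hE t))
    have hdiff : Differentiable ℝ F := fun t => (hFd t).differentiableAt
    have hmono : MonotoneOn F (Icc 0 c) := by
      apply monotoneOn_of_deriv_nonneg (convex_Icc 0 c) hdiff.continuous.continuousOn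
        (hdiff.differentiableOn)
      intro t ht
      rw [interior_Icc] at ht
      rw [(hFd t).deriv]
      have h1 : t < c := ht.2
      have h2 : 0 < t := ht.1
      have he : 0 < Real.exp (-t^2) := Real.exp_pos _
      have : 2 / Real.sqrt Real.pi = 2 * c := by rw [hc]; ring
      rw [this]
      nlinarith
    have h0 : F 0 = 0 := by simp [hF, erf]
    have := hmono (left_mem_Icc.mpr hcpos.le) ⟨hx, hxc⟩ hx
    rw [h0] at this
    simp only [hF] at this
    linarith
  · -- tail part
    have hx0 : 0 < x := lt_trans hcpos hxc
    have herf : erf x = 1 - (2 / Real.sqrt Real.pi) * ∫ t in Ioi x, Real.exp (-t^2) := by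
      rw [erf, split_int hx0.le]
      field_simp
    have htail := tail_bound hx0
    rw [herf]
    have hkey : (2 / Real.sqrt Real.pi) * (∫ t in Ioi x, Real.exp (-t^2))
        ≤ Real.exp (-x^2) := by
      have h1 : (2 / Real.sqrt Real.pi) * (∫ t in Ioi x, Real.exp (-t^2))
          ≤ (2 / Real.sqrt Real.pi) * (Real.exp (-x^2) / (2*x)) := by
        apply mul_le_mul_of_nonneg_left htail (by positivity)
      refine h1.trans ?_
      have hxs : 1 ≤ x * Real.sqrt Real.pi := by
        calc (1:ℝ) = c * Real.sqrt Real.pi := hcmul.symm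
          _ ≤ x * Real.sqrt Real.pi := by nlinarith
      have he : 0 < Real.exp (-x^2) := Real.exp_pos _
      have heq : 2 / Real.sqrt Real.pi * (Real.exp (-x^2) / (2*x))
          = Real.exp (-x^2) / (x * Real.sqrt Real.pi) := by
        field_simp
      rw [heq]
      exact div_le_self he.le hxs
    linarith

/-- With `K = YθS/ε` and `x = √(ln(K+1))`, for every Fourier truncation order
`M ≥ (S/π)·(2·ln(K+1) + ln S + ln(2/π))` the Fourier error
`E_Fourier = (YθS²/π)·(1/erf x)·e^{x²}·e^{-πM/S}` is at most `ε/2`. -/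
theorem fourier_error_small (Y θ ε S : ℝ) (hY : 0 < Y) (hθ : 0 < θ) (hε : 0 < ε)
    (hS : 1 ≤ S) (K x : ℝ) (hK : K = Y * θ * S / ε) (hx : x = Real.sqrt (Real.log (K + 1)))
    (M : ℝ) (hM : (S / Real.pi) * (2 * Real.log (K + 1) + Real.log S + Real.log (2 / Real.pi)) ≤ M) :
    Y * θ * S ^ 2 / Real.pi * (1 / erf x) * Real.exp (x ^ 2) * Real.exp (-Real.pi * M / S)
      ≤ ε / 2 := by
  have hπ := Real.pi_pos
  have hS0 : 0 < S := lt_of_lt_of_le one_pos hS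
  have hK0 : 0 < K := by rw [hK]; positivity
  set L := Real.log (K + 1) with hL
  have hL0 : 0 < L := Real.log_pos (by linarith)
  have hx0 : 0 ≤ x := hx ▸ Real.sqrt_nonneg _
  have hx2 : x ^ 2 = L := by rw [hx, Real.sq_sqrt hL0.le]
  have hexp : Real.exp (x ^ 2) = K + 1 := by rw [hx2, hL, Real.exp_log (by linarith)]
  have herf : K / (K + 1) ≤ erf x := by
    have h := erf_lower hx0
    have hexp' : Real.exp (-x ^ 2) = (K + 1)⁻¹ := by rw [Real.exp_neg, hexp]
    rw [hexp'] at h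
    have heq : 1 - (K + 1)⁻¹ = K / (K + 1) := by field_simp; ring
    linarith [heq ▸ h]
  have herf0 : 0 < erf x := lt_of_lt_of_le (by positivity) herf
  have hinv : 1 / erf x ≤ (K + 1) / K := by
    rw [div_le_div_iff₀ herf0 hK0]
    have h := mul_le_mul_of_nonneg_right herf (show (0:ℝ) ≤ K + 1 by linarith)
    rw [div_mul_cancel₀ _ (show K + 1 ≠ (0:ℝ) by linarith)] at h
    nlinarith
  have hMb : 2 * L + Real.log S + Real.log (2 / Real.pi) ≤ Real.pi * M / S := by
    have h := mul_le_mul_of_nonneg_left hM (le_of_lt (div_pos hπ hS0))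
    have h2 : Real.pi / S * (S / Real.pi * (2 * L + Real.log S + Real.log (2 / Real.pi)))
        = 2 * L + Real.log S + Real.log (2 / Real.pi) := by
      field_simp
    have h3 : Real.pi / S * M = Real.pi * M / S := by ring
    rw [h2, h3] at h
    exact h
  have hE : Real.exp (-Real.pi * M / S) ≤ Real.pi / (2 * S * (K + 1) ^ 2) := by
    have h1 : Real.exp (-Real.pi * M / S)
        ≤ Real.exp (-(2 * L + Real.log S + Real.log (2 / Real.pi))) := by
      apply Real.exp_le_exp.mpr
      have : -Real.pi * M / S = -(Real.pi * M / S) := by ring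
      rw [this]
      linarith
    refine h1.trans_eq ?_
    rw [show -(2 * L + Real.log S + Real.log (2 / Real.pi))
        = (-(2*L)) + (-Real.log S) + (-Real.log (2 / Real.pi)) by ring,
      Real.exp_add, Real.exp_add, Real.exp_neg, Real.exp_neg, Real.exp_neg,
      Real.exp_log hS0, Real.exp_log (by positivity : (0:ℝ) < 2 / Real.pi)]
    have : Real.exp (2 * L) = (K + 1) ^ 2 := by
      rw [two_mul, Real.exp_add, hL, Real.exp_log (by linarith)]
      ring
    rw [this, inv_div]
    field_simp
  rw [hexp]
  have hchain : Y * θ * S ^ 2 / Real.pi * (1 / erf x) * (K + 1) * Real.exp (-Real.pi * M / S)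
      ≤ Y * θ * S ^ 2 / Real.pi * ((K + 1) / K) * (K + 1) * (Real.pi / (2 * S * (K + 1) ^ 2)) := by
    gcongr <;> positivity
  refine hchain.trans ?_
  rw [hK]
  have hYθS : 0 < Y * θ * S := by positivity
  have : Y * θ * S ^ 2 / Real.pi * ((Y * θ * S / ε + 1) / (Y * θ * S / ε)) * (Y * θ * S / ε + 1)
      * (Real.pi / (2 * S * (Y * θ * S / ε + 1) ^ 2)) = ε / 2 := by
    have hne1 : Y * θ * S / ε + 1 ≠ 0 := by positivity
    have hne2 : Y * θ * S / ε ≠ 0 := by positivity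
    field_simp
  linarith [this]
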